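/- Suppose max(A, B+2, F) < p̄(q), and assume the relevant three-vertices exist (A + B, A + F parities compatible, admissibility conditions hold). Then the tetrahedral network evaluates as Tet[A, B, 2; B+2, A, F] = (1/[A]) · [(A − B + F)/2] · Θ(A, F, B+2). -/
import Mathlib


/-- The quantum integer `[m]`, with the convention `[m] = m·q^(m-1)` when `q = ±1`. -/
noncomputable def qint (q : ℂ) (m : ℤ) : ℂ :=
  if q ^ 2 = 1 then (m : ℂ) * q ^ (m - 1)
  else (q ^ m - q ^ (-m)) / (q - q⁻¹)

/-- The quantum factorial `[m]! = [1][2]⋯[m]`, with `[0]! = 1`. -/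
noncomputable def qfact (q : ℂ) : ℕ → ℂ
  | 0 => 1
  | n + 1 => qfact q n * qint q ((n : ℤ) + 1)

open scoped Classical in
/-- `p̄(q)`: the least `p > 0` with `q^(2p) = 1` if `q` is a root of unity other than `±1`,
and `∞` otherwise. -/
noncomputable def pbar (q : ℂ) : ℕ∞ :=
  if q = 1 ∨ q = -1 then ⊤
  else if ∃ p : ℕ, 0 < p ∧ q ^ (2 * p) = 1 then
    ((sInf {p : ℕ | 0 < p ∧ q ^ (2 * p) = 1} : ℕ) : ℕ∞)
  else ⊤

/-- The closed-form evaluation of the Theta network `Θ(r,s,t)`. -/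
noncomputable def thetaFormula (q : ℂ) (r s t : ℕ) : ℂ :=
  (-1 : ℂ) ^ ((r + s + t) / 2) * qfact q ((r + s + t) / 2 + 1) *
      qfact q ((r + s - t) / 2) * qfact q ((s + t - r) / 2) * qfact q ((t + r - s) / 2) /
    (qfact q r * qfact q s * qfact q t)

/-- The evaluation of the tetrahedral network `Tet[A B E; C D F]` of
Temperley-Lieb recoupling theory (Kauffman-Lins), whose vertices carry the triples
`(A,D,E)`, `(B,C,E)`, `(A,B,F)`, `(C,D,F)`, given by the standard closed formula. -/
noncomputable def tetFormula (q : ℂ) (A B E C D F : ℕ) : ℂ :=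
  let a1 := (A + D + E) / 2
  let a2 := (B + C + E) / 2
  let a3 := (A + B + F) / 2
  let a4 := (C + D + F) / 2
  let b1 := (B + D + E + F) / 2
  let b2 := (A + C + E + F) / 2
  let b3 := (A + B + C + D) / 2
  (qfact q (b1 - a1) * qfact q (b1 - a2) * qfact q (b1 - a3) * qfact q (b1 - a4) *
        qfact q (b2 - a1) * qfact q (b2 - a2) * qfact q (b2 - a3) * qfact q (b2 - a4) *
        qfact q (b3 - a1) * qfact q (b3 - a2) * qfact q (b3 - a3) * qfact q (b3 - a4)) /
      (qfact q A * qfact q B * qfact q E * qfact q C * qfact q D * qfact q F) *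
    ∑ z ∈ Finset.Icc (max (max a1 a2) (max a3 a4)) (min (min b1 b2) b3),
      ((-1 : ℂ) ^ z * qfact q (z + 1)) /
        (qfact q (z - a1) * qfact q (z - a2) * qfact q (z - a3) * qfact q (z - a4) *
          qfact q (b1 - z) * qfact q (b2 - z) * qfact q (b3 - z))

lemma qint_zero (q : ℂ) : qint q 0 = 0 := by
  unfold qint; split <;> simp

lemma qint_ne_zero {q : ℂ} (hq : q ≠ 0) {k : ℕ} (hk : 0 < k)
    (h : (k : ℕ∞) < pbar q) : qint q (k : ℤ) ≠ 0 := by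
  unfold qint
  by_cases h1 : q ^ 2 = 1
  · rw [if_pos h1]
    exact mul_ne_zero (by exact_mod_cast Nat.cast_ne_zero.mpr hk.ne') (zpow_ne_zero _ hq)
  · have hq2 : q ^ (2 * k) ≠ 1 := by
      intro hc
      have hne : ¬(q = 1 ∨ q = -1) := by
        rintro (rfl | rfl) <;> simp at h1
      unfold pbar at h
      rw [if_neg hne, if_pos ⟨k, hk, hc⟩] at h
      have hle := Nat.sInf_le (show k ∈ {p : ℕ | 0 < p ∧ q ^ (2 * p) = 1} from ⟨hk, hc⟩)
      exact absurd h (not_lt.mpr (by exact_mod_cast hle))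
    rw [if_neg h1]
    have hden : q - q⁻¹ ≠ 0 := by
      intro hc
      apply h1
      have : q = q⁻¹ := sub_eq_zero.mp hc
      have := congrArg (· * q) this
      simp [inv_mul_cancel₀ hq] at this
      rw [sq, ← this]
    apply div_ne_zero _ hden
    intro hc
    apply hq2
    have h3 : q ^ (k : ℤ) = q ^ (-(k : ℤ)) := sub_eq_zero.mp hc
    have := congrArg (· * q ^ (k : ℤ)) h3
    simp only [← zpow_add₀ hq] at this
    rw [neg_add_cancel, zpow_zero] at this
    rw [show 2 * k = k + k by ring, pow_add, ← zpow_natCast q k, ← zpow_add₀ hq]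
    exact this

lemma qint_one {q : ℂ} (hq : q ≠ 0) : qint q 1 = 1 := by
  unfold qint
  split
  · simp
  · next h1 =>
    rw [zpow_one, zpow_neg, zpow_one, div_self]
    intro hc
    apply h1
    have : q = q⁻¹ := sub_eq_zero.mp hc
    have := congrArg (· * q) this
    simp [inv_mul_cancel₀ hq] at this
    rw [sq, ← this]

lemma qfact_one (q : ℂ) : qfact q 1 = qint q 1 := by simp [qfact]

lemma qfact_succ' (q : ℂ) {k : ℕ} (hk : 0 < k) :
    qfact q k = qfact q (k - 1) * qint q (k : ℤ) := by
  obtain ⟨j, rfl⟩ := Nat.exists_eq_succ_of_ne_zero hk.ne'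
  simp only [qfact, Nat.succ_sub_one]
  norm_num

lemma qfact_ne_zero {q : ℂ} (hq : q ≠ 0) {k : ℕ} (h : (k : ℕ∞) < pbar q) :
    qfact q k ≠ 0 := by
  induction k with
  | zero => simp [qfact]
  | succ n ih =>
    simp only [qfact]
    refine mul_ne_zero (ih ?_) ?_
    · exact lt_of_le_of_lt (by exact_mod_cast Nat.le_succ n) h
    · have := qint_ne_zero hq (Nat.succ_pos n) h
      have e : ((n : ℤ) + 1) = ((n + 1 : ℕ) : ℤ) := by push_cast; ring
      rw [e]
      exact this

set_option maxHeartbeats 2000000 in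
/-- for `max(A, B+2, F) < p̄(q)`, assuming the relevant three-vertices
exist (compatible parities and admissibility), the tetrahedral network evaluates as
`Tet[A, B, 2; B+2, A, F] = (1/[A])·[(A-B+F)/2]·Θ(A, F, B+2)`. -/
theorem tetrahedral_special_evaluation (A B F : ℕ) (q : ℂ) (hq : q ≠ 0)
    (hp : ((max A (max (B + 2) F) : ℕ) : ℕ∞) < pbar q)
    (hA : 1 ≤ A) (hpar : (A + B + F) % 2 = 0)
    (h1 : F ≤ A + B) (h2 : A ≤ B + F) (h3 : B ≤ A + F) :
    tetFormula q A B 2 (B + 2) A F =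
      1 / qint q (A : ℤ) * qint q (((A + F - B) / 2 : ℕ) : ℤ) *
        thetaFormula q A F (B + 2) := by
  have hple : ∀ k : ℕ, k ≤ max A (max (B + 2) F) → (k : ℕ∞) < pbar q := fun k hk =>
    lt_of_le_of_lt (by exact_mod_cast hk) hp
  obtain ⟨n, hn2⟩ : ∃ n, A + B + F = 2 * n := ⟨(A + B + F) / 2, by omega⟩
  by_cases hcase : B + 2 ≤ A + F
  · -- main case
    obtain ⟨m, hm⟩ : ∃ m, A + F = B + 2 + 2 * m := ⟨(A + F - B - 2) / 2, by omega⟩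
    obtain ⟨f, hf⟩ : ∃ f, B + F = A + 2 * f := ⟨(B + F - A) / 2, by omega⟩
    obtain ⟨g, hg⟩ : ∃ g, A + B = F + 2 * g := ⟨(A + B - F) / 2, by omega⟩
    simp only [tetFormula, thetaFormula]
    rw [show (A + A + 2) / 2 = A + 1 from by omega,
        show (B + (B + 2) + 2) / 2 = B + 2 from by omega,
        show (A + B + F) / 2 = n from by omega,
        show (B + 2 + A + F) / 2 = n + 1 from by omega,
        show (B + A + 2 + F) / 2 = n + 1 from by omega,
        show (A + (B + 2) + 2 + F) / 2 = n + 2 from by omega,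
        show (A + B + (B + 2) + A) / 2 = A + B + 1 from by omega,
        show (A + F + (B + 2)) / 2 = n + 1 from by omega,
        show (A + F - (B + 2)) / 2 = m from by omega,
        show (F + (B + 2) - A) / 2 = f + 1 from by omega,
        show (B + 2 + A - F) / 2 = g + 1 from by omega,
        show (A + F - B) / 2 = m + 1 from by omega,
        show max (max (A + 1) (B + 2)) (max n (n + 1)) = n + 1 from by omega,
        show min (min (n + 1) (n + 2)) (A + B + 1) = n + 1 from by omega,
        Finset.Icc_self, Finset.sum_singleton,
        show n + 1 - (A + 1) = f from by omega,
        show n + 1 - (B + 2) = m from by omega,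
        show n + 1 - n = 1 from by omega,
        show n + 1 - (n + 1) = 0 from by omega,
        show n + 2 - (A + 1) = f + 1 from by omega,
        show n + 2 - (B + 2) = m + 1 from by omega,
        show n + 2 - n = 2 from by omega,
        show n + 2 - (n + 1) = 1 from by omega,
        show A + B + 1 - (A + 1) = B from by omega,
        show A + B + 1 - (B + 2) = A - 1 from by omega,
        show A + B + 1 - n = g + 1 from by omega,
        show A + B + 1 - (n + 1) = g from by omega]
    rw [qfact_succ' q (show 0 < A from hA),
        show qfact q (m + 1) = qfact q m * qint q ((m + 1 : ℕ) : ℤ) from by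
          simp only [qfact]; norm_num,
        show qfact q 0 = 1 from rfl, qfact_one, qint_one hq]
    have hqfA1 : qfact q (A - 1) ≠ 0 := qfact_ne_zero hq (hple _ (by omega))
    have hqfB : qfact q B ≠ 0 := qfact_ne_zero hq (hple _ (by omega))
    have hqfB2 : qfact q (B + 2) ≠ 0 := qfact_ne_zero hq (hple _ (by omega))
    have hqfF : qfact q F ≠ 0 := qfact_ne_zero hq (hple _ (by omega))
    have hqf2 : qfact q 2 ≠ 0 := qfact_ne_zero hq (hple _ (by omega))
    have hqff : qfact q f ≠ 0 := qfact_ne_zero hq (hple _ (by omega))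
    have hqfm : qfact q m ≠ 0 := qfact_ne_zero hq (hple _ (by omega))
    have hqfg : qfact q g ≠ 0 := qfact_ne_zero hq (hple _ (by omega))
    have hqA : qint q (A : ℤ) ≠ 0 := qint_ne_zero hq hA (hple _ (by omega))
    rw [div_mul_div_comm, one_div_mul_eq_div, div_mul_div_comm,
        div_eq_div_iff
          (by repeat first | assumption | exact one_ne_zero | apply mul_ne_zero)
          (by repeat first | assumption | exact one_ne_zero | apply mul_ne_zero)]
    ring
  · -- degenerate case: B = A + F, empty sum, and [0] = 0
    have hBf : B = A + F := by omega
    rw [show (A + F - B) / 2 = 0 from by omega, show ((0 : ℕ) : ℤ) = 0 from by norm_num,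
        qint_zero]
    simp only [tetFormula]
    rw [show (A + A + 2) / 2 = A + 1 from by omega,
        show (B + (B + 2) + 2) / 2 = B + 2 from by omega,
        show (A + B + F) / 2 = n from by omega,
        show (B + 2 + A + F) / 2 = n + 1 from by omega,
        show (B + A + 2 + F) / 2 = n + 1 from by omega,
        show (A + (B + 2) + 2 + F) / 2 = n + 2 from by omega,
        show (A + B + (B + 2) + A) / 2 = A + B + 1 from by omega,
        Finset.Icc_eq_empty (show ¬ max (max (A + 1) (B + 2)) (max n (n + 1)) ≤
          min (min (n + 1) (n + 2)) (A + B + 1) from by omega),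
        Finset.sum_empty, mul_zero]
    ring
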